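/- If (x, n, B, k) is a prefix polymorphism with n ≥ 3, then k = 1. -/
import Mathlib


/-- A quadruple `(x, n, B, k)` of positive integers with `B ≥ 2` is a *prefix
polymorphism* if `x^n = B^k·n + x` and `B^(k-1) ≤ x < B^k` (i.e. `x` has exactly
`k` digits in base `B`). -/
def IsPrefixPolymorphism (x n B k : ℕ) : Prop :=
  0 < x ∧ 0 < n ∧ 2 ≤ B ∧ 0 < k ∧
    x ^ n = B ^ k * n + x ∧ B ^ (k - 1) ≤ x ∧ x < B ^ k

lemma aux_two_pow (n : ℕ) (hn : 7 ≤ n) : n * (n + 1) < 2 ^ (n - 1) := by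
  induction n with
  | zero => omega
  | succ m ih =>
    rcases Nat.lt_or_ge m 7 with hm | hm
    · interval_cases m <;> first | omega | norm_num
    · have h1 : m * (m + 1) < 2 ^ (m - 1) := ih (by omega)
      have h2 : (2:ℕ) ^ m = 2 * 2 ^ (m - 1) := by
        rw [← pow_succ']; congr 1; omega
      have : m + 1 - 1 = m := by omega
      rw [this, h2]
      nlinarith

/-- If `(x, n, B, k)` is a prefix polymorphism with `n ≥ 3`, then `k = 1`. -/
theorem prefix_polymorphism_n_ge_three_k_eq_one (x n B k : ℕ)
    (h : IsPrefixPolymorphism x n B k) (hn : 3 ≤ n) :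
    k = 1 := by
  obtain ⟨hx, hnpos, hB, hk, heq, hlo, hhi⟩ := h
  by_contra hk1
  have hk2 : 2 ≤ k := by omega
  -- x ≥ B
  have hBle : B ≤ B ^ (k - 1) := le_self_pow (by omega) (by omega)
  have hBx : B ≤ x := le_trans hBle hlo
  have hx2 : 2 ≤ x := le_trans hB hBx
  -- x^n < B^k * (n+1)
  have h1 : x ^ n < B ^ k * (n + 1) := by
    rw [heq, mul_add, mul_one]; omega
  -- B^(k-1) * x^(n-1) ≤ x^n
  have hxsplit : x ^ n = x ^ (n - 1) * x := by
    rw [← pow_succ]; congr 1; omega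
  have hBsplit : B ^ k = B ^ (k - 1) * B := by
    rw [← pow_succ]; congr 1; omega
  have h2 : B ^ (k - 1) * x ^ (n - 1) < B ^ (k - 1) * (B * (n + 1)) := by
    calc B ^ (k - 1) * x ^ (n - 1) ≤ x ^ (n - 1) * x := by
          rw [mul_comm]; exact Nat.mul_le_mul_left _ hlo
      _ = x ^ n := hxsplit.symm
      _ < B ^ k * (n + 1) := h1
      _ = B ^ (k - 1) * (B * (n + 1)) := by rw [hBsplit, mul_assoc]
  have hkey : x ^ (n - 1) < B * (n + 1) :=
    Nat.lt_of_mul_lt_mul_left h2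
  -- x^2 ≤ x^(n-1)
  have hx2le : x ^ 2 ≤ x ^ (n - 1) :=
    Nat.pow_le_pow_right (by omega) (by omega)
  -- B ≤ n
  have hBn : B ≤ n := by
    have : B * B ≤ x ^ 2 := by
      have := Nat.pow_le_pow_left hBx 2
      simpa [pow_two] using this
    have hlt : B * B < B * (n + 1) := lt_of_le_of_lt (this.trans hx2le) hkey
    have := Nat.lt_of_mul_lt_mul_left hlt
    omega
  -- n ≤ 6
  have hn6 : n ≤ 6 := by
    by_contra hn7
    have h7 : 7 ≤ n := by omega
    have h2n : (2:ℕ) ^ (n - 1) ≤ x ^ (n - 1) := Nat.pow_le_pow_left hx2 _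
    have := aux_two_pow n h7
    have : x ^ (n - 1) < x ^ (n - 1) := by
      calc x ^ (n - 1) < B * (n + 1) := hkey
        _ ≤ n * (n + 1) := Nat.mul_le_mul_right _ hBn
        _ < 2 ^ (n - 1) := aux_two_pow n h7
        _ ≤ x ^ (n - 1) := h2n
    omega
  -- x ≤ 6
  have hx6 : x ≤ 6 := by
    by_contra hx7
    have : (7:ℕ) * 7 ≤ x ^ 2 := by nlinarith
    have : x ^ 2 < 42 := by
      calc x ^ 2 ≤ x ^ (n - 1) := hx2le
        _ < B * (n + 1) := hkey
        _ ≤ 6 * 7 := Nat.mul_le_mul (by omega) (by omega)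
    omega
  have hB6 : B ≤ 6 := le_trans hBx hx6
  -- k ≤ 3
  have hk3 : k ≤ 3 := by
    by_contra hk4
    have : (2:ℕ) ^ 3 ≤ 2 ^ (k - 1) := Nat.pow_le_pow_right (by omega) (by omega)
    have h2k : (2:ℕ) ^ (k - 1) ≤ B ^ (k - 1) := Nat.pow_le_pow_left hB _
    omega
  interval_cases n <;> interval_cases B <;> interval_cases k <;>
    interval_cases x <;> omega
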